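/- Let k be a field of characteristic 0 and work in the polynomial ring k[X,Y,Z,W]. For any a, b ∈ k with b ≠ 0, one has the ideal identity ((X,Y)², Y(aZ + bW)) ∩ (Y, Z) = (X, Y, aZ + bW)² ∩ (Y, X²) ∩ (Y, Z), where (X, Y, aZ + bW)² denotes the ideal generated by all products of two elements from {X, Y, aZ + bW}. -/

import Mathlib

open MvPolynomial

/-- The substitution Y ↦ 0 (killing variable `X 1`). -/
private noncomputable def psiY (k : Type*) [CommRing k] :
    MvPolynomial (Fin 4) k →ₐ[k] MvPolynomial (Fin 4) k :=
  aeval ![X 0, 0, X 2, X 3]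

private lemma psiY_X0 (k : Type*) [CommRing k] : psiY k (X 0) = X 0 := by
  simp [psiY]

private lemma psiY_X1 (k : Type*) [CommRing k] : psiY k (X 1) = 0 := by
  simp [psiY]

private lemma psiY_X2 (k : Type*) [CommRing k] : psiY k (X 2) = X 2 := by
  simp [psiY]

private lemma psiY_X3 (k : Type*) [CommRing k] : psiY k (X 3) = X 3 := by
  simp [psiY]

private lemma psiY_C (k : Type*) [CommRing k] (a : k) : psiY k (C a) = C a := by
  simp [psiY, algebraMap_eq]

private lemma psiY_X (k : Type*) [CommRing k] (n : Fin 4) :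
    psiY k (X n) = if n = 1 then 0 else X n := by
  fin_cases n <;> simp [psiY]

private lemma sub_psiY_mem_span_X1 {k : Type*} [CommRing k]
    (p : MvPolynomial (Fin 4) k) :
    p - psiY k p ∈ Ideal.span {(X 1 : MvPolynomial (Fin 4) k)} := by
  induction p using MvPolynomial.induction_on with
  | C a => simp [psiY_C]
  | add p q hp hq =>
      have := Ideal.add_mem _ hp hq
      simpa [map_add, add_sub_add_comm] using this
  | mul_X p n hp =>
      rw [Ideal.mem_span_singleton] at hp ⊢
      rw [map_mul, psiY_X]
      by_cases hn : n = 1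
      · rw [if_pos hn, mul_zero, sub_zero, hn]
        exact dvd_mul_left _ _
      · rw [if_neg hn]
        simpa [mul_sub_right_distrib] using hp.mul_right (X n)

set_option maxHeartbeats 1000000 in
/-- In k[X,Y,Z,W] (variables X = X 0, Y = X 1, Z = X 2, W = X 3), for b ≠ 0:
((X,Y)², Y(aZ + bW)) ∩ (Y, Z) = (X, Y, aZ + bW)² ∩ (Y, X²) ∩ (Y, Z). -/
theorem ideal_identity_case_III (k : Type*) [Field k] [CharZero k] (a b : k) (hb : b ≠ 0) :
    Ideal.span {(X 0 : MvPolynomial (Fin 4) k) ^ 2, X 0 * X 1, X 1 ^ 2,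
        X 1 * (C a * X 2 + C b * X 3)} ⊓
      Ideal.span {(X 1 : MvPolynomial (Fin 4) k), X 2} =
    Ideal.span {(X 0 : MvPolynomial (Fin 4) k) ^ 2, X 0 * X 1, X 0 * (C a * X 2 + C b * X 3),
        X 1 ^ 2, X 1 * (C a * X 2 + C b * X 3), (C a * X 2 + C b * X 3) ^ 2} ⊓
      Ideal.span {(X 1 : MvPolynomial (Fin 4) k), X 0 ^ 2} ⊓
      Ideal.span {(X 1 : MvPolynomial (Fin 4) k), X 2} := by
  set L : MvPolynomial (Fin 4) k := C a * X 2 + C b * X 3 with hLdef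
  have hψL : psiY k L = L := by
    rw [hLdef, map_add, map_mul, map_mul, psiY_C, psiY_C, psiY_X2, psiY_X3]
  set I : Ideal (MvPolynomial (Fin 4) k) :=
    Ideal.span {(X 0 : MvPolynomial (Fin 4) k) ^ 2, X 0 * X 1, X 1 ^ 2, X 1 * L} with hIdef
  set M : Ideal (MvPolynomial (Fin 4) k) := Ideal.span {X 0 * L, L ^ 2} with hMdef
  set B : Ideal (MvPolynomial (Fin 4) k) :=
    Ideal.span {(X 1 : MvPolynomial (Fin 4) k), X 0 ^ 2} with hBdef
  have hX1B : (X 1 : MvPolynomial (Fin 4) k) ∈ B := Ideal.subset_span (by simp)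
  have hX02B : ((X 0 : MvPolynomial (Fin 4) k) ^ 2) ∈ B := Ideal.subset_span (by simp)
  have hJ : Ideal.span {(X 0 : MvPolynomial (Fin 4) k) ^ 2, X 0 * X 1, X 0 * L,
      X 1 ^ 2, X 1 * L, L ^ 2} = I ⊔ M := by
    rw [hIdef, hMdef, ← Ideal.span_union]
    congr 1
    ext x
    simp only [Set.mem_insert_iff, Set.mem_union, Set.mem_singleton_iff]
    tauto
  have hIB : I ≤ B := by
    rw [hIdef, Ideal.span_le]
    rintro x hx
    simp only [Set.mem_insert_iff, Set.mem_singleton_iff] at hx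
    rcases hx with h | h | h | h <;> subst h
    · exact hX02B
    · exact Ideal.mul_mem_left _ _ hX1B
    · rw [pow_two]; exact Ideal.mul_mem_left _ _ hX1B
    · exact Ideal.mul_mem_right _ _ hX1B
  have hMB : M ⊓ B ≤ I := by
    intro f hf
    rw [Ideal.mem_inf] at hf
    obtain ⟨hfM, hfB⟩ := hf
    rw [hMdef, Ideal.mem_span_pair] at hfM
    rw [hBdef, Ideal.mem_span_pair] at hfB
    obtain ⟨p, q, hpq⟩ := hfM
    obtain ⟨α, β, hab⟩ := hfB
    obtain ⟨c, hc⟩ := Ideal.mem_span_singleton.mp (sub_psiY_mem_span_X1 p)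
    obtain ⟨d, hd⟩ := Ideal.mem_span_singleton.mp (sub_psiY_mem_span_X1 q)
    have hψeq : psiY k p * (X 0 * L) + psiY k q * L ^ 2 = psiY k β * X 0 ^ 2 := by
      have h1 := congrArg (psiY k) hpq
      have h2 := congrArg (psiY k) hab
      simp only [map_add, map_mul, map_pow, psiY_X0, psiY_X1, hψL, zero_mul, mul_zero,
        zero_add] at h1 h2
      rw [h1, ← h2]
    have hrep : f = psiY k β * X 0 ^ 2 + (X 1 * c) * (X 0 * L) + (X 1 * d) * L ^ 2 := by
      linear_combination -hpq + hψeq + (X 0 * L) * hc + L ^ 2 * hd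
    rw [hrep, hIdef]
    refine Ideal.add_mem _ (Ideal.add_mem _ ?_ ?_) ?_
    · exact Ideal.mul_mem_left _ _ (Ideal.subset_span (by simp))
    · have he : (X 1 * c) * (X 0 * L) = (c * L) * (X 0 * X 1) := by ring
      rw [he]
      exact Ideal.mul_mem_left _ _ (Ideal.subset_span (by simp))
    · have he : (X 1 * d) * L ^ 2 = (d * L) * (X 1 * L) := by ring
      rw [he]
      exact Ideal.mul_mem_left _ _ (Ideal.subset_span (by simp only [Set.mem_insert_iff, Set.mem_singleton_iff, or_true]))
  have key : Ideal.span {(X 0 : MvPolynomial (Fin 4) k) ^ 2, X 0 * X 1, X 0 * L,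
      X 1 ^ 2, X 1 * L, L ^ 2} ⊓ B = I := by
    rw [hJ, sup_inf_assoc_of_le M hIB]
    exact sup_eq_left.mpr hMB
  rw [key]
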